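/- Let m, n be positive integers and let F be a binary image contained in {1,…,m} × {1,…,n} with row sums r_1,…,r_m and column sums c_1,…,c_n. Define b_i = #{j ∈ {1,…,n} : c_j ≥ i}. Suppose k is an integer with 1 ≤ k ≤ m such that Σ_{i=1}^{k} r_i < Σ_{i=1}^{k} b_i. Then there exists a column index j with 1 ≤ j ≤ n such that #{i : 1 ≤ i ≤ k and (i,j) ∈ F} < min(c_j, k); equivalently, column j contains at least one point of F in some row i with k+1 ≤ i ≤ m and at least one row i with 1 ≤ i ≤ k such that (i,j) ∉ F. -/

import Mathlib

/-- The row sum `r i` of a binary image `F`: the number of points of `F` in row `i`. -/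
def rowSum (F : Finset (ℤ × ℤ)) (i : ℤ) : ℕ := (F.filter fun p => p.1 = i).card

/-- The column sum `c j` of a binary image `F`: the number of points of `F` in column `j`. -/
def colSum (F : Finset (ℤ × ℤ)) (j : ℤ) : ℕ := (F.filter fun p => p.2 = j).card

/-- The length of the horizontal boundary of `F`: the number of pairs
`((i,j),(i',j'))` with `j = j'`, `|i - i'| = 1`, `(i,j) ∈ F` and `(i',j') ∉ F`. -/
noncomputable def horizBoundaryLen (F : Finset (ℤ × ℤ)) : ℕ :=
  Set.ncard {q : (ℤ × ℤ) × (ℤ × ℤ) |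
    q.1.2 = q.2.2 ∧ |q.1.1 - q.2.1| = 1 ∧ q.1 ∈ F ∧ q.2 ∉ F}

/-- If `Σ_{i=1}^k r_i < Σ_{i=1}^k b_i`, then there is a column `j` containing
fewer than `min(c_j, k)` points of `F` in rows `1, …, k` (equivalently: column `j`
has a point of `F` in some row `i > k` and a missing point in some row `i ≤ k`). -/
theorem exists_deficient_column (m n : ℕ) (hm : 0 < m) (hn : 0 < n)
    (F : Finset (ℤ × ℤ))
    (hF : ∀ p ∈ F, p.1 ∈ Finset.Icc (1 : ℤ) (m : ℤ) ∧ p.2 ∈ Finset.Icc (1 : ℤ) (n : ℤ))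
    (b : ℤ → ℕ)
    (hb : ∀ i : ℤ, b i = ((Finset.Icc (1 : ℤ) (n : ℤ)).filter fun j => i ≤ (colSum F j : ℤ)).card)
    (k : ℤ) (hk1 : 1 ≤ k) (hkm : k ≤ (m : ℤ))
    (hlt : ∑ i ∈ Finset.Icc (1 : ℤ) k, (rowSum F i : ℤ) <
      ∑ i ∈ Finset.Icc (1 : ℤ) k, (b i : ℤ)) :
    ∃ j : ℤ, 1 ≤ j ∧ j ≤ (n : ℤ) ∧
      ((F.filter fun p => p.2 = j ∧ 1 ≤ p.1 ∧ p.1 ≤ k).card : ℤ) <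
        min ((colSum F j : ℤ)) k := by
  by_contra hcon
  push_neg at hcon
  set S := F.filter (fun p => 1 ≤ p.1 ∧ p.1 ≤ k) with hS
  -- row sums equal |S|
  have hrows : ∑ i ∈ Finset.Icc (1:ℤ) k, (rowSum F i : ℤ) = (S.card : ℤ) := by
    have h1 : S.card = ∑ i ∈ Finset.Icc (1:ℤ) k, (S.filter (fun p => p.1 = i)).card :=
      Finset.card_eq_sum_card_fiberwise (fun p hp => by
        replace hp : p ∈ S := hp
        simp only [hS, Finset.mem_filter] at hp
        simpa [Finset.mem_Icc] using hp.2)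
    have h2 : ∀ i ∈ Finset.Icc (1:ℤ) k, (S.filter (fun p => p.1 = i)) = F.filter (fun p => p.1 = i) := by
      intro i hi
      rw [Finset.mem_Icc] at hi
      ext p
      simp only [hS, Finset.mem_filter, Finset.filter_filter]
      constructor
      · rintro ⟨hpF, _, h⟩; exact ⟨hpF, h⟩
      · rintro ⟨hpF, h⟩; exact ⟨hpF, ⟨h ▸ hi.1, h ▸ hi.2⟩, h⟩
    rw [h1]
    push_cast
    exact Finset.sum_congr rfl (fun i hi => by rw [h2 i hi, rowSum])
  -- |S| as a sum over columns
  have hcols : (S.card : ℤ) = ∑ j ∈ Finset.Icc (1:ℤ) (n:ℤ),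
      ((F.filter fun p => p.2 = j ∧ 1 ≤ p.1 ∧ p.1 ≤ k).card : ℤ) := by
    have h1 : S.card = ∑ j ∈ Finset.Icc (1:ℤ) (n:ℤ), (S.filter (fun p => p.2 = j)).card :=
      Finset.card_eq_sum_card_fiberwise (fun p hp => by
        replace hp : p ∈ S := hp
        simp only [hS, Finset.mem_filter] at hp
        exact (hF p hp.1).2)
    have h2 : ∀ j, (S.filter (fun p => p.2 = j)) = F.filter (fun p => p.2 = j ∧ 1 ≤ p.1 ∧ p.1 ≤ k) := by
      intro j
      ext p
      simp only [hS, Finset.mem_filter, Finset.filter_filter]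
      tauto
    rw [h1]
    push_cast
    exact Finset.sum_congr rfl (fun j _ => by rw [h2 j])
  -- b sums equal sum of mins
  have hbsum : ∑ i ∈ Finset.Icc (1:ℤ) k, (b i : ℤ) =
      ∑ j ∈ Finset.Icc (1:ℤ) (n:ℤ), min ((colSum F j : ℤ)) k := by
    have h1 : ∀ i : ℤ, (b i : ℤ) = ∑ j ∈ Finset.Icc (1:ℤ) (n:ℤ),
        (if i ≤ (colSum F j : ℤ) then (1:ℤ) else 0) := by
      intro i
      rw [hb i]
      push_cast [Finset.card_filter]
      rfl
    rw [Finset.sum_congr rfl (fun i _ => h1 i), Finset.sum_comm]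
    refine Finset.sum_congr rfl (fun j _ => ?_)
    rw [Finset.sum_boole]
    have : (Finset.Icc (1:ℤ) k).filter (fun i => i ≤ (colSum F j : ℤ)) =
        Finset.Icc (1:ℤ) (min ((colSum F j : ℤ)) k) := by
      ext i
      simp only [Finset.mem_filter, Finset.mem_Icc, le_min_iff]
      tauto
    rw [this, Int.card_Icc]
    omega
  -- combine
  have hge : ∑ j ∈ Finset.Icc (1:ℤ) (n:ℤ), min ((colSum F j : ℤ)) k ≤
      ∑ j ∈ Finset.Icc (1:ℤ) (n:ℤ),
        ((F.filter fun p => p.2 = j ∧ 1 ≤ p.1 ∧ p.1 ≤ k).card : ℤ) := by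
    refine Finset.sum_le_sum (fun j hj => ?_)
    rw [Finset.mem_Icc] at hj
    exact hcon j hj.1 hj.2
  rw [hrows, hcols, hbsum] at hlt
  omega
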